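/- Let Φ be a completely positive linear map between matrix algebras. Then for any positive definite matrix A and arbitrary matrix K, Φ(K)* Φ(A)⁻¹ Φ(K) ≤ Φ(K* A⁻¹ K), provided Φ(A) is positive definite. -/

import Mathlib

open Matrix
open scoped ComplexOrder Classical

/-- Square root of a positive semidefinite matrix, extended by `0`. -/
noncomputable def msqrt {n : Type*} [Fintype n] [DecidableEq n] (A : Matrix n n ℂ) :
    Matrix n n ℂ :=
  if h : A.PosSemidef then
    h.1.eigenvectorUnitary.1 * diagonal ((↑) ∘ Real.sqrt ∘ h.1.eigenvalues) *
      (star h.1.eigenvectorUnitary : Matrix n n ℂ) else 0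

/-- Real power of a Hermitian matrix via the functional calculus, extended by `0`. -/
noncomputable def mrpow {n : Type*} [Fintype n] [DecidableEq n] (A : Matrix n n ℂ) (α : ℝ) :
    Matrix n n ℂ :=
  if h : A.IsHermitian then h.cfc (fun t => t ^ α) else 0

/-- A completely positive linear map between matrix algebras (Choi–Kraus form). -/
def IsCPMap {n m : Type*} [Fintype n] [Fintype m] (Φ : Matrix n n ℂ → Matrix m m ℂ) : Prop :=
  ∃ (r : ℕ) (C : Fin r → Matrix n m ℂ), ∀ X, Φ X = ∑ i, (C i)ᴴ * X * C i

/-- The matrix geometric mean `A^{1/2} (A^{-1/2} B A^{-1/2})^{1/2} A^{1/2}`. -/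
noncomputable def geomMean {n : Type*} [Fintype n] [DecidableEq n] (A B : Matrix n n ℂ) :
    Matrix n n ℂ :=
  msqrt A * msqrt ((msqrt A)⁻¹ * B * (msqrt A)⁻¹) * msqrt A

/-- The weighted geometric mean `B^{1/2} (B^{-1/2} A B^{-1/2})^α B^{1/2}`. -/
noncomputable def wgeomMean {n : Type*} [Fintype n] [DecidableEq n] (α : ℝ)
    (A B : Matrix n n ℂ) : Matrix n n ℂ :=
  msqrt B * mrpow ((msqrt B)⁻¹ * A * (msqrt B)⁻¹) α * msqrt B

/-- The harmonic mean `2 (A⁻¹ + B⁻¹)⁻¹`. -/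
noncomputable def harmMean {n : Type*} [Fintype n] [DecidableEq n] (A B : Matrix n n ℂ) :
    Matrix n n ℂ :=
  (2 : ℂ) • (A⁻¹ + B⁻¹)⁻¹

lemma sum_fromBlocks {ι n m : Type*} [Fintype ι] (s : Finset ι)
    (f : ι → Matrix n n ℂ) (g : ι → Matrix n m ℂ) (h : ι → Matrix m n ℂ)
    (k : ι → Matrix m m ℂ) :
    ∑ i ∈ s, fromBlocks (f i) (g i) (h i) (k i) =
      fromBlocks (∑ i ∈ s, f i) (∑ i ∈ s, g i) (∑ i ∈ s, h i) (∑ i ∈ s, k i) := by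
  ext i j
  cases i <;> cases j <;> simp [Matrix.sum_apply]

/-- Lieb–Ruskai under a completely positive map. -/
theorem cp_lieb_ruskai {n m : Type*} [Fintype n] [DecidableEq n] [Fintype m] [DecidableEq m]
    (Φ : Matrix n n ℂ → Matrix m m ℂ) (hΦ : IsCPMap Φ)
    (A K : Matrix n n ℂ) (hA : A.PosDef) (hΦA : (Φ A).PosDef) :
    (Φ (Kᴴ * A⁻¹ * K) - (Φ K)ᴴ * (Φ A)⁻¹ * Φ K).PosSemidef := by
  obtain ⟨r, C, hC⟩ := hΦ
  haveI : Invertible A := hA.isUnit.invertible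
  haveI : Invertible (Φ A) := hΦA.isUnit.invertible
  -- The big block matrix is PSD
  have hM : (fromBlocks A K Kᴴ (Kᴴ * A⁻¹ * K)).PosSemidef := by
    rw [Matrix.PosDef.fromBlocks₁₁ _ _ hA]
    simpa using Matrix.PosSemidef.zero
  -- conjugate by block-diagonal Kraus operators
  have key : ∀ i : Fin r,
      (fromBlocks (C i) 0 0 (C i))ᴴ * fromBlocks A K Kᴴ (Kᴴ * A⁻¹ * K) *
        fromBlocks (C i) 0 0 (C i) =
      fromBlocks ((C i)ᴴ * A * C i) ((C i)ᴴ * K * C i) ((C i)ᴴ * Kᴴ * C i)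
        ((C i)ᴴ * (Kᴴ * A⁻¹ * K) * C i) := by
    intro i
    simp [Matrix.fromBlocks_conjTranspose, Matrix.fromBlocks_multiply, Matrix.mul_assoc]
  have hN : (fromBlocks (Φ A) (Φ K) (Φ K)ᴴ (Φ (Kᴴ * A⁻¹ * K))).PosSemidef := by
    have hΦKH : (Φ K)ᴴ = ∑ i, (C i)ᴴ * Kᴴ * C i := by
      rw [hC]
      simp [Matrix.conjTranspose_sum, Matrix.conjTranspose_mul, Matrix.mul_assoc]
    rw [hΦKH, hC K, hC A, hC (Kᴴ * A⁻¹ * K), ← sum_fromBlocks]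
    have : ∀ i ∈ Finset.univ, (fromBlocks ((C i)ᴴ * A * C i) ((C i)ᴴ * K * C i)
        ((C i)ᴴ * Kᴴ * C i) ((C i)ᴴ * (Kᴴ * A⁻¹ * K) * C i)).PosSemidef := by
      intro i _
      rw [← key i]
      exact hM.conjTranspose_mul_mul_same _
    exact Finset.sum_induction _ _ (fun a b ha hb => ha.add hb) Matrix.PosSemidef.zero this
  rwa [Matrix.PosDef.fromBlocks₁₁ _ _ hΦA] at hN
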